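/- For A ∈ M_n(ℂ), a unit vector x ∈ ℂ^n, and r > 0, the image f_A(S ∩ B_r) is a convex subset of ℂ, where S is the unit sphere of ℂ^n and B_r is the closed ball of radius r around x. -/

import Mathlib

open Matrix Real
open scoped InnerProductSpace

/-- The map `f_A(x) = x* A x` on `ℂ^n` (with the Euclidean norm). -/
noncomputable def numRangeMap {n : ℕ} (A : Matrix (Fin n) (Fin n) ℂ)
    (x : EuclideanSpace ℂ (Fin n)) : ℂ :=
  star (x : Fin n → ℂ) ⬝ᵥ A.mulVec (x : Fin n → ℂ)

namespace NumRangeAux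

variable {n : ℕ}

private lemma quad_expand (B : Matrix (Fin n) (Fin n) ℂ) (a b : Fin n → ℂ) (s t : ℂ) :
    star (s • a + t • b) ⬝ᵥ B.mulVec (s • a + t • b) =
      starRingEnd ℂ s * s * (star a ⬝ᵥ B.mulVec a)
      + starRingEnd ℂ s * t * (star a ⬝ᵥ B.mulVec b)
      + starRingEnd ℂ t * s * (star b ⬝ᵥ B.mulVec a)
      + starRingEnd ℂ t * t * (star b ⬝ᵥ B.mulVec b) := by
  simp only [star_add, star_smul, Matrix.mulVec_add, Matrix.mulVec_smul, dotProduct_add,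
    add_dotProduct, smul_dotProduct, dotProduct_smul, smul_eq_mul, RCLike.star_def]
  ring

lemma numRange_expand (B : Matrix (Fin n) (Fin n) ℂ) (u v : EuclideanSpace ℂ (Fin n)) (s t : ℂ) :
    numRangeMap B (s • u + t • v) =
      starRingEnd ℂ s * s * numRangeMap B u
      + starRingEnd ℂ s * t * (star (u : Fin n → ℂ) ⬝ᵥ B.mulVec (v : Fin n → ℂ))
      + starRingEnd ℂ t * s * (star (v : Fin n → ℂ) ⬝ᵥ B.mulVec (u : Fin n → ℂ))
      + starRingEnd ℂ t * t * numRangeMap B v :=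
  quad_expand B u v s t

private lemma quad_smul (B : Matrix (Fin n) (Fin n) ℂ) (a : Fin n → ℂ) (c : ℂ) :
    star (c • a) ⬝ᵥ B.mulVec (c • a) = starRingEnd ℂ c * c * (star a ⬝ᵥ B.mulVec a) := by
  simp only [star_smul, Matrix.mulVec_smul, smul_dotProduct, dotProduct_smul, smul_eq_mul,
    RCLike.star_def]
  ring

lemma numRange_smul (B : Matrix (Fin n) (Fin n) ℂ) (c : ℂ) (w : EuclideanSpace ℂ (Fin n)) :
    numRangeMap B (c • w) = starRingEnd ℂ c * c * numRangeMap B w :=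
  quad_smul B w c

lemma inner_eq_dot (u v : EuclideanSpace ℂ (Fin n)) :
    ⟪u, v⟫_ℂ = star (u : Fin n → ℂ) ⬝ᵥ (v : Fin n → ℂ) := by
  rw [EuclideanSpace.inner_eq_star_dotProduct, dotProduct_comm]

lemma dot_self_eq (w : EuclideanSpace ℂ (Fin n)) :
    star (w : Fin n → ℂ) ⬝ᵥ (w : Fin n → ℂ) = (‖w‖ : ℂ)^2 := by
  rw [← inner_eq_dot, inner_self_eq_norm_sq_to_K]; rfl

/-- cap membership characterization -/
lemma mem_cap_iff (x w : EuclideanSpace ℂ (Fin n)) (hx : ‖x‖ = 1) (hw : ‖w‖ = 1)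
    {r : ℝ} (hr : 0 < r) :
    w ∈ Metric.closedBall x r ↔ 1 - r ^ 2 / 2 ≤ (⟪x, w⟫_ℂ).re := by
  rw [Metric.mem_closedBall, dist_eq_norm]
  have h := norm_sub_sq (𝕜 := ℂ) w x
  have hre : RCLike.re ⟪w, x⟫_ℂ = (⟪x, w⟫_ℂ).re := by
    rw [inner_re_symm]; exact RCLike.re_to_complex
  rw [hre, hw, hx] at h
  constructor
  · intro h'
    nlinarith [norm_nonneg (w - x)]
  · intro h'
    nlinarith [norm_nonneg (w - x), norm_nonneg (w - x)]


set_option maxHeartbeats 2000000 in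
lemma key (B : Matrix (Fin n) (Fin n) ℂ) (x y z : EuclideanSpace ℂ (Fin n))
    (hx : ‖x‖ = 1) (hy : ‖y‖ = 1) (hz : ‖z‖ = 1) {r : ℝ} (hr : 0 < r)
    (hyb : y ∈ Metric.closedBall x r) (hzb : z ∈ Metric.closedBall x r)
    (h0 : numRangeMap B y = 0) (h1 : numRangeMap B z = 1)
    {lam : ℝ} (hl0 : 0 ≤ lam) (hl1 : lam ≤ 1) :
    ∃ w : EuclideanSpace ℂ (Fin n), ‖w‖ = 1 ∧ w ∈ Metric.closedBall x r ∧
      numRangeMap B w = (lam : ℂ) := by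
  set c : ℝ := 1 - r ^ 2 / 2 with hc_def
  have hyc : c ≤ (⟪x, y⟫_ℂ).re := (mem_cap_iff x y hx hy hr).1 hyb
  have hzc : c ≤ (⟪x, z⟫_ℂ).re := (mem_cap_iff x z hx hz hr).1 hzb
  set p : ℂ := star (y : Fin n → ℂ) ⬝ᵥ B.mulVec (z : Fin n → ℂ) with hp_def
  set q : ℂ := star (z : Fin n → ℂ) ⬝ᵥ B.mulVec (y : Fin n → ℂ) with hq_def
  set d : ℂ := p - starRingEnd ℂ q with hd_def
  obtain ⟨μ, hμ1, hμd⟩ : ∃ μ : ℂ, ‖μ‖ = 1 ∧ (μ * d).im = 0 := by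
    by_cases hd : d = 0
    · exact ⟨1, by simp, by simp [hd]⟩
    · refine ⟨starRingEnd ℂ d / ‖d‖, ?_, ?_⟩
      · rw [norm_div]; simp [hd]
      · have h : starRingEnd ℂ d / (‖d‖ : ℂ) * d = ((Complex.normSq d : ℝ) : ℂ) / (‖d‖ : ℂ) := by
          rw [div_mul_eq_mul_div]; congr 1; rw [mul_comm, Complex.mul_conj]
        rw [h]
        have h2 : ((Complex.normSq d : ℝ) : ℂ) / ((‖d‖ : ℝ) : ℂ) =
            (((Complex.normSq d / ‖d‖ : ℝ)) : ℂ) := by push_cast; ring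
        rw [h2, Complex.ofReal_im]
  set ξ : ℂ := μ * p + starRingEnd ℂ μ * q with hξ_def
  have hξim : ξ.im = 0 := by
    have h : ξ = μ * d + (μ * starRingEnd ℂ q + starRingEnd ℂ (μ * starRingEnd ℂ q)) := by
      rw [hξ_def, hd_def]; simp [_root_.map_mul]; ring
    rw [h]; simp [Complex.add_im, hμd]; ring
  have hμμ : starRingEnd ℂ μ * μ = 1 := by
    rw [mul_comm, Complex.mul_conj]
    norm_cast
    rw [Complex.normSq_eq_norm_sq, hμ1]; norm_num
  set z' : EuclideanSpace ℂ (Fin n) := μ • z with hz'_def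
  have hz'n : ‖z'‖ = 1 := by rw [hz'_def, norm_smul, hμ1, hz]; norm_num
  have hz'1 : numRangeMap B z' = 1 := by
    rw [hz'_def, numRange_smul, h1, hμμ]; norm_num
  set ω : ℝ := (⟪y, z'⟫_ℂ).re with hω_def
  -- strict Cauchy-Schwarz for the real part
  have hωabs : |ω| < 1 := by
    have habs : |ω| ≤ 1 := by
      calc |ω| ≤ ‖⟪y, z'⟫_ℂ‖ := Complex.abs_re_le_norm _
        _ = ‖⟪y, z'⟫_ℂ‖ := rfl
        _ ≤ ‖y‖ * ‖z'‖ := norm_inner_le_norm y z'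
        _ = 1 := by rw [hy, hz'n]; norm_num
    rcases eq_or_lt_of_le habs with heq | hlt
    · exfalso
      rcases abs_eq (by norm_num : (0:ℝ) ≤ 1) |>.1 heq with h1' | h1'
      · -- ω = 1 : y = z'
        have hsub : ‖y - z'‖ ^ 2 = 0 := by
          rw [norm_sub_sq (𝕜 := ℂ), hy, hz'n]
          have : RCLike.re ⟪y, z'⟫_ℂ = ω := RCLike.re_to_complex
          rw [this, h1']; ring
        have : y = z' := by
          exact sub_eq_zero.1 (norm_eq_zero.1 (sq_eq_zero_iff.1 hsub))
        rw [this, hz'1] at h0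
        exact one_ne_zero h0
      · -- ω = -1 : y = -z'
        have hsub : ‖y + z'‖ ^ 2 = 0 := by
          rw [norm_add_sq (𝕜 := ℂ), hy, hz'n]
          have : RCLike.re ⟪y, z'⟫_ℂ = ω := RCLike.re_to_complex
          rw [this, h1']; ring
        have hyz : y = -z' := by
          have := norm_eq_zero.1 (sq_eq_zero_iff.1 hsub)
          linear_combination (norm := abel) this
        have : numRangeMap B y = 1 := by
          have hneg : y = (-1 : ℂ) • z' := by rw [hyz, neg_one_smul]
          rw [hneg, numRange_smul, hz'1]
          simp
        rw [h0] at this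
        exact one_ne_zero this.symm
    · exact hlt
  -- the path
  set u : ℝ → EuclideanSpace ℂ (Fin n) :=
    fun σ => ((Real.cos σ : ℂ)) • y + ((Real.sin σ : ℂ)) • z' with hu_def
  set nsq : ℝ → ℝ := fun σ => 1 + 2 * (Real.cos σ * Real.sin σ * ω) with hnsq_def
  have husq : ∀ σ, ‖u σ‖ ^ 2 = nsq σ := by
    intro σ
    rw [hu_def]
    simp only
    rw [norm_add_sq (𝕜 := ℂ)]
    rw [inner_smul_left, inner_smul_right, norm_smul, norm_smul]
    simp only [Complex.conj_ofReal, Complex.norm_real, Real.norm_eq_abs]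
    have hre : RCLike.re ((Real.cos σ : ℂ) * ((Real.sin σ : ℂ) * ⟪y, z'⟫_ℂ))
        = Real.cos σ * Real.sin σ * ω := by
      rw [hω_def, RCLike.re_to_complex]
      rw [← mul_assoc]
      have : ((Real.cos σ : ℂ)) * ((Real.sin σ : ℂ)) = ((Real.cos σ * Real.sin σ : ℝ) : ℂ) := by
        push_cast; ring
      rw [this, Complex.re_ofReal_mul]
    rw [hre, hy, hz'n, hnsq_def]
    have h1 := Real.sin_sq_add_cos_sq σ
    simp only [mul_one, sq_abs]
    linarith
  have hnsqpos : ∀ σ, 0 < nsq σ := by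
    intro σ
    have h2cs : |2 * (Real.cos σ * Real.sin σ)| ≤ 1 := by
      have : 2 * (Real.cos σ * Real.sin σ) = Real.sin (2 * σ) := by
        rw [Real.sin_two_mul]; ring
      rw [this]; exact abs_le.2 ⟨Real.neg_one_le_sin _, Real.sin_le_one _⟩
    have h3 : |2 * (Real.cos σ * Real.sin σ) * ω| < 1 := by
      rw [abs_mul]
      calc |2 * (Real.cos σ * Real.sin σ)| * |ω| ≤ 1 * |ω| :=
            mul_le_mul_of_nonneg_right h2cs (abs_nonneg _)
        _ = |ω| := one_mul _
        _ < 1 := hωabs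
    rw [hnsq_def]
    simp only
    have := abs_lt.1 h3
    nlinarith [this.1]
  have hupos : ∀ σ, 0 < ‖u σ‖ := by
    intro σ
    have h := hnsqpos σ
    rw [← husq] at h
    nlinarith [norm_nonneg (u σ)]
  -- value along the path
  have hξre : ((ξ.re : ℝ) : ℂ) = ξ := Complex.ext (by simp) (by simp [hξim])
  have hcross1 : star (y : Fin n → ℂ) ⬝ᵥ B.mulVec (z' : Fin n → ℂ) = μ * p := by
    show star (y : Fin n → ℂ) ⬝ᵥ B.mulVec (μ • (z : Fin n → ℂ)) = μ * p
    rw [Matrix.mulVec_smul, dotProduct_smul, smul_eq_mul]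
  have hcross2 : star (z' : Fin n → ℂ) ⬝ᵥ B.mulVec (y : Fin n → ℂ) = starRingEnd ℂ μ * q := by
    show star (μ • (z : Fin n → ℂ)) ⬝ᵥ B.mulVec (y : Fin n → ℂ) = _
    rw [star_smul, smul_dotProduct, smul_eq_mul, RCLike.star_def]
  have hval : ∀ σ, numRangeMap B (u σ) =
      ((Real.sin σ ^ 2 + Real.cos σ * Real.sin σ * ξ.re : ℝ) : ℂ) := by
    intro σ
    rw [hu_def]
    simp only
    rw [numRange_expand, h0, hz'1, hcross1, hcross2]
    simp only [Complex.conj_ofReal]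
    have hx2 : ((ξ.re : ℝ) : ℂ) = μ * p + starRingEnd ℂ μ * q := by rw [hξre]
    rw [Complex.ofReal_add, Complex.ofReal_mul, Complex.ofReal_mul, Complex.ofReal_pow]
    linear_combination (-(Real.cos σ : ℂ) * (Real.sin σ : ℂ)) * hx2
  -- the real-valued function along the path
  set G : ℝ → ℝ :=
    fun σ => (Real.sin σ ^ 2 + Real.cos σ * Real.sin σ * ξ.re) / nsq σ with hG_def
  have hGcont : Continuous G := by
    apply Continuous.div
    · fun_prop
    · rw [hnsq_def]; fun_prop
    · exact fun σ => (hnsqpos σ).ne'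
  have hG0 : G 0 = 0 := by simp [hG_def, hnsq_def]
  have hGhalf : G (π / 2) = 1 := by simp [hG_def, hnsq_def]
  have hGpi : G π = 0 := by simp [hG_def, hnsq_def]
  -- inner products along the path
  set av : ℂ := ⟪x, y⟫_ℂ with hav_def
  set bv : ℂ := ⟪x, z'⟫_ℂ with hbv_def
  have hζ : ∀ σ, ⟪x, u σ⟫_ℂ = (Real.cos σ : ℂ) * av + (Real.sin σ : ℂ) * bv := by
    intro σ
    rw [hu_def]
    simp only
    rw [inner_add_right, inner_smul_right, inner_smul_right]
  have hav : c ≤ ‖av‖ := le_trans hyc (Complex.re_le_norm _)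
  have hbv : c ≤ ‖bv‖ := by
    have h : ‖bv‖ = ‖⟪x, z⟫_ℂ‖ := by
      rw [hbv_def, hz'_def, inner_smul_right, norm_mul]
      have : ‖μ‖ = 1 := hμ1
      rw [this, one_mul]
    rw [h]
    exact le_trans hzc (Complex.re_le_norm _)
  -- main selection of σ
  have main : ∃ σ, c * ‖u σ‖ ≤ ‖⟪x, u σ⟫_ℂ‖ ∧ G σ = lam := by
    have hIcc1 : (0:ℝ) ≤ π / 2 := by positivity
    have hIcc2 : π / 2 ≤ π := by linarith [Real.pi_pos]
    rcases le_or_gt c 0 with hc | hc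
    · obtain ⟨σ, hσmem, hσ⟩ := intermediate_value_Icc hIcc1 hGcont.continuousOn
        (by rw [hG0, hGhalf]; exact ⟨hl0, hl1⟩)
      refine ⟨σ, ?_, hσ⟩
      exact le_trans (mul_nonpos_of_nonpos_of_nonneg hc (norm_nonneg _))
        (norm_nonneg _)
    · set δ : ℝ := (starRingEnd ℂ av * bv).re - c ^ 2 * ω with hδ_def
      have hQ : ∀ σ, 0 ≤ Real.cos σ * Real.sin σ * δ →
          c * ‖u σ‖ ≤ ‖⟪x, u σ⟫_ℂ‖ := by
        intro σ hcs
        rw [hδ_def] at hcs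
        have h1 : c ^ 2 ≤ ‖av‖ ^ 2 := pow_le_pow_left₀ hc.le hav 2
        have h2 : c ^ 2 ≤ ‖bv‖ ^ 2 := pow_le_pow_left₀ hc.le hbv 2
        have hexp : ‖⟪x, u σ⟫_ℂ‖ ^ 2 =
            Real.cos σ ^ 2 * ‖av‖ ^ 2 + Real.sin σ ^ 2 * ‖bv‖ ^ 2
            + 2 * (Real.cos σ * Real.sin σ * (starRingEnd ℂ av * bv).re) := by
          rw [hζ σ]
          simp only [Complex.sq_norm, Complex.normSq_apply, Complex.add_re, Complex.add_im,
            Complex.mul_re, Complex.mul_im, Complex.ofReal_re, Complex.ofReal_im,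
            Complex.conj_re, Complex.conj_im]
          ring
        have hsq : (c * ‖u σ‖) ^ 2 ≤ ‖⟪x, u σ⟫_ℂ‖ ^ 2 := by
          rw [mul_pow, husq σ, hexp, hnsq_def]
          simp only
          have hpyth := Real.sin_sq_add_cos_sq σ
          nlinarith [mul_nonneg (sq_nonneg (Real.cos σ)) (sub_nonneg.2 h1),
            mul_nonneg (sq_nonneg (Real.sin σ)) (sub_nonneg.2 h2), hcs]
        nlinarith [norm_nonneg (⟪x, u σ⟫_ℂ),
          mul_nonneg hc.le (norm_nonneg (u σ)), hsq]
      rcases le_or_gt 0 δ with hδ | hδ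
      · obtain ⟨σ, hσmem, hσ⟩ := intermediate_value_Icc hIcc1 hGcont.continuousOn
          (by rw [hG0, hGhalf]; exact ⟨hl0, hl1⟩)
        refine ⟨σ, hQ σ ?_, hσ⟩
        have hcos : 0 ≤ Real.cos σ := Real.cos_nonneg_of_mem_Icc
          ⟨by linarith [hσmem.1, hIcc1], hσmem.2⟩
        have hsin : 0 ≤ Real.sin σ := Real.sin_nonneg_of_nonneg_of_le_pi hσmem.1
          (by linarith [hσmem.2])
        exact mul_nonneg (mul_nonneg hcos hsin) hδ
      · obtain ⟨σ, hσmem, hσ⟩ := intermediate_value_Icc' hIcc2 hGcont.continuousOn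
          (by rw [hGpi, hGhalf]; exact ⟨hl0, hl1⟩)
        refine ⟨σ, hQ σ ?_, hσ⟩
        have hcos : Real.cos σ ≤ 0 := Real.cos_nonpos_of_pi_div_two_le_of_le hσmem.1
          (by linarith [hσmem.2, Real.pi_pos])
        have hsin : 0 ≤ Real.sin σ := Real.sin_nonneg_of_nonneg_of_le_pi
          (by linarith [hσmem.1]) hσmem.2
        have hprod : Real.cos σ * Real.sin σ ≤ 0 := mul_nonpos_of_nonpos_of_nonneg hcos hsin
        nlinarith [mul_nonneg (neg_nonneg.2 hprod) (neg_nonneg.2 hδ.le)]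
  obtain ⟨σ, hfeas, hGσ⟩ := main
  -- construct the witness
  set ζ0 : ℂ := ⟪x, u σ⟫_ℂ with hζ0_def
  set Nv : ℝ := ‖u σ‖ with hNv_def
  have hNvpos : 0 < Nv := hupos σ
  set ε : ℂ := if ζ0 = 0 then 1 else starRingEnd ℂ ζ0 / ‖ζ0‖ with hε_def
  have hε1 : ‖ε‖ = 1 := by
    rw [hε_def]
    split_ifs with h
    · simp
    · rw [norm_div]
      simp [h]
  have hεζ : ε * ζ0 = ((‖ζ0‖ : ℝ) : ℂ) := by
    rw [hε_def]
    split_ifs with h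
    · simp [h]
    · have habs : ‖ζ0‖ ≠ 0 := by simpa using h
      rw [div_mul_eq_mul_div, mul_comm, Complex.mul_conj]
      rw [Complex.normSq_eq_norm_sq]
      have habs' : ((‖ζ0‖ : ℝ) : ℂ) ≠ 0 := by exact_mod_cast habs
      push_cast
      rw [sq, mul_div_assoc, div_self habs', mul_one]
  set t0 : ℂ := ((Nv⁻¹ : ℝ) : ℂ) * ε with ht0_def
  set w : EuclideanSpace ℂ (Fin n) := t0 • u σ with hw_def
  have hw1 : ‖w‖ = 1 := by
    rw [hw_def, norm_smul, ht0_def, norm_mul, hε1, Complex.norm_real]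
    rw [Real.norm_eq_abs, abs_of_pos (inv_pos.2 hNvpos)]
    rw [← hNv_def]
    field_simp
  have ht0sq : starRingEnd ℂ t0 * t0 = ((Nv⁻¹ ^ 2 : ℝ) : ℂ) := by
    rw [ht0_def]
    have hεε : starRingEnd ℂ ε * ε = 1 := by
      rw [mul_comm, Complex.mul_conj]
      norm_cast
      rw [Complex.normSq_eq_norm_sq, hε1]
      norm_num
    rw [_root_.map_mul, Complex.conj_ofReal]
    push_cast
    linear_combination ((Nv : ℝ) : ℂ)⁻¹ * ((Nv : ℝ) : ℂ)⁻¹ * hεε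
  have hwval : numRangeMap B w = (lam : ℂ) := by
    rw [hw_def, numRange_smul, ht0sq, hval σ]
    have : (Nv⁻¹ ^ 2 : ℝ) * (Real.sin σ ^ 2 + Real.cos σ * Real.sin σ * ξ.re) = lam := by
      rw [← hGσ, hG_def]
      simp only
      rw [← husq σ, ← hNv_def]
      field_simp
    push_cast [← this]
    ring
  have hwball : w ∈ Metric.closedBall x r := by
    rw [mem_cap_iff x w hx hw1 hr]
    have hinner : ⟪x, w⟫_ℂ = ((Nv⁻¹ * ‖ζ0‖ : ℝ) : ℂ) := by
      rw [hw_def, inner_smul_right, ht0_def, ← hζ0_def]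
      rw [mul_assoc, hεζ]
      push_cast
      ring
    rw [hinner]
    rw [Complex.ofReal_re]
    rw [← hc_def]
    have : c * Nv * Nv⁻¹ ≤ ‖ζ0‖ * Nv⁻¹ :=
      mul_le_mul_of_nonneg_right hfeas (inv_nonneg.2 hNvpos.le)
    rw [mul_assoc, mul_inv_cancel₀ hNvpos.ne', mul_one] at this
    linarith
  exact ⟨w, hw1, hwball, hwval⟩

end NumRangeAux

open NumRangeAux in
theorem stmt_3 {n : ℕ} (A : Matrix (Fin n) (Fin n) ℂ)
    (x : EuclideanSpace ℂ (Fin n)) (hx : ‖x‖ = 1) (r : ℝ) (hr : 0 < r) :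
    Convex ℝ (numRangeMap A '' (Metric.sphere 0 1 ∩ Metric.closedBall x r)) := by
  rintro p ⟨y, ⟨hyS, hyB⟩, rfl⟩ q ⟨z, ⟨hzS, hzB⟩, rfl⟩ a b ha hb hab
  have hy1 : ‖y‖ = 1 := by simpa using mem_sphere_zero_iff_norm.1 hyS
  have hz1 : ‖z‖ = 1 := by simpa using mem_sphere_zero_iff_norm.1 hzS
  by_cases hpq : numRangeMap A z = numRangeMap A y
  · refine ⟨y, ⟨hyS, hyB⟩, ?_⟩
    rw [hpq, ← add_smul, hab, one_smul]
  · have hsub : numRangeMap A z - numRangeMap A y ≠ 0 := sub_ne_zero.2 hpq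
    set B : Matrix (Fin n) (Fin n) ℂ :=
      (numRangeMap A z - numRangeMap A y)⁻¹ •
        (A - numRangeMap A y • (1 : Matrix (Fin n) (Fin n) ℂ)) with hB_def
    have hg : ∀ w : EuclideanSpace ℂ (Fin n), ‖w‖ = 1 → numRangeMap B w =
        (numRangeMap A z - numRangeMap A y)⁻¹ * (numRangeMap A w - numRangeMap A y) := by
      intro w hw
      simp only [numRangeMap, hB_def]
      rw [Matrix.smul_mulVec, Matrix.sub_mulVec, Matrix.smul_mulVec,
        Matrix.one_mulVec, dotProduct_smul, dotProduct_sub, dotProduct_smul]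
      rw [dot_self_eq w, hw]
      push_cast
      simp only [smul_eq_mul]
      ring
    have h0 : numRangeMap B y = 0 := by rw [hg y hy1]; simp
    have h1 : numRangeMap B z = 1 := by
      rw [hg z hz1]
      field_simp
    obtain ⟨w, hw1, hwb, hwv⟩ := key B x y z hx hy1 hz1 hr hyB hzB h0 h1 hb (by linarith)
    refine ⟨w, ⟨mem_sphere_zero_iff_norm.2 hw1, hwb⟩, ?_⟩
    have hthis := hg w hw1
    rw [hwv] at hthis
    have hfa : numRangeMap A w
        = numRangeMap A y + (b : ℂ) * (numRangeMap A z - numRangeMap A y) := by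
      field_simp at hthis
      linear_combination -hthis
    have hab' : (a : ℂ) + (b : ℂ) = 1 := by exact_mod_cast congrArg (Complex.ofReal) hab
    rw [hfa, Complex.real_smul, Complex.real_smul]
    linear_combination (-(numRangeMap A y)) * hab'
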